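/- Let ξ be a random vector in ℝ^p whose coordinates are i.i.d. standard normal random variables, let Σ be a real symmetric positive definite p×p matrix with positive semidefinite square root Σ^{1/2}, let m ∈ ℝ^p, and set X = m + Σ^{1/2} ξ. Then for every z ∈ ℝ with 2|z|·λmax(Σ) < 1 (λmax(Σ) being the largest eigenvalue of Σ), E[ exp(z‖X‖²) ] = exp( (1/2) Σ_{k=1}^∞ (2^k z^k / k) · Tr(Σ^k + k Σ^{k−1} m mᵀ) ), where ‖X‖² = XᵀX is the squared Euclidean norm, and the series converges absolutely. -/

import Mathlib

open Matrix MeasureTheory ProbabilityTheory Real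
open scoped ENNReal NNReal

section

open scoped ComplexOrder

/-- The positive semidefinite square root of a positive semidefinite matrix
(the definition `Matrix.PosSemidef.sqrt` of the older Mathlib, since removed). -/
noncomputable def Matrix.PosSemidef.sqrt {n 𝕜 : Type*} [Fintype n] [RCLike 𝕜] [DecidableEq n]
    {A : Matrix n n 𝕜} (hA : A.PosSemidef) : Matrix n n 𝕜 :=
  hA.1.eigenvectorUnitary.1 * diagonal ((↑) ∘ (√·) ∘ hA.1.eigenvalues) *
  (star hA.1.eigenvectorUnitary : Matrix n n 𝕜)

end

section Stmt4Aux


lemma lintegral_pi_prod {n : ℕ} {α : Type*} [MeasurableSpace α]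
    (μ : Fin n → Measure α) [∀ i, SigmaFinite (μ i)]
    (f : Fin n → α → ℝ≥0∞) (hf : ∀ i, Measurable (f i)) :
    ∫⁻ x, ∏ i, f i (x i) ∂Measure.pi μ = ∏ i, ∫⁻ x, f i x ∂μ i := by
  induction n with
  | zero => simp [lintegral_const, Measure.pi_univ]
  | succ n ih =>
    have mp := measurePreserving_piFinSuccAbove μ 0
    have hG : Measurable fun z : α × (Fin n → α) =>
        f 0 z.1 * ∏ i : Fin n, f i.succ (z.2 i) := by
      apply Measurable.mul
      · exact (hf 0).comp measurable_fst
      · exact Finset.measurable_prod _ fun i _ =>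
          (hf i.succ).comp ((measurable_pi_apply i).comp measurable_snd)
    calc ∫⁻ x, ∏ i, f i (x i) ∂Measure.pi μ
        = ∫⁻ x, (fun z : α × (Fin n → α) => f 0 z.1 * ∏ i : Fin n, f i.succ (z.2 i))
            ((MeasurableEquiv.piFinSuccAbove (fun _ => α) 0) x) ∂Measure.pi μ := by
          apply lintegral_congr
          intro x
          simp [MeasurableEquiv.piFinSuccAbove, Fin.prod_univ_succ, Fin.zero_succAbove,
            Fin.tail]
      _ = ∫⁻ z, f 0 z.1 * ∏ i : Fin n, f i.succ (z.2 i)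
            ∂((μ 0).prod (Measure.pi fun j => μ ((0 : Fin (n+1)).succAbove j))) :=
          mp.lintegral_comp hG
      _ = (∫⁻ x, f 0 x ∂μ 0) * ∫⁻ y : Fin n → α, ∏ i : Fin n, f i.succ (y i)
            ∂(Measure.pi fun j => μ ((0 : Fin (n+1)).succAbove j)) :=
          lintegral_prod_mul ((hf 0).aemeasurable)
            ((Finset.measurable_prod _ fun (i : Fin n) _ =>
              (hf i.succ).comp (measurable_pi_apply i)).aemeasurable)
      _ = (∫⁻ x, f 0 x ∂μ 0) * ∏ i : Fin n, ∫⁻ x, f i.succ x ∂μ i.succ := by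
          congr 1
          · simp_rw [Fin.zero_succAbove]
            exact ih _ _ fun i => hf i.succ
      _ = ∏ i, ∫⁻ x, f i x ∂μ i := by rw [Fin.prod_univ_succ]

lemma pi_gauss (p : ℕ) :
    Measure.pi (fun _ : Fin p => gaussianReal 0 1) =
      (volume : Measure (Fin p → ℝ)).withDensity
        (fun x => ∏ i, gaussianPDF 0 1 (x i)) := by
  refine Measure.pi_eq fun s hs => ?_
  rw [withDensity_apply _ (MeasurableSet.univ_pi hs),
    ← lintegral_indicator (MeasurableSet.univ_pi hs)]
  have key : ∀ x : Fin p → ℝ,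
      Set.indicator (Set.univ.pi s) (fun x => ∏ i, gaussianPDF 0 1 (x i)) x
        = ∏ i, Set.indicator (s i) (gaussianPDF 0 1) (x i) := by
    intro x
    by_cases h : x ∈ Set.univ.pi s
    · rw [Set.indicator_of_mem h]
      refine Finset.prod_congr rfl fun i _ => ?_
      rw [Set.indicator_of_mem (h i (Set.mem_univ i))]
    · rw [Set.indicator_of_notMem h]
      simp only [Set.mem_univ_pi] at h
      push_neg at h
      obtain ⟨i, hi⟩ := h
      exact (Finset.prod_eq_zero (Finset.mem_univ i)
        (by rw [Set.indicator_of_notMem hi])).symm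
  simp_rw [key]
  rw [volume_pi, lintegral_pi_prod _ _
    (fun i => (measurable_gaussianPDF 0 1).indicator (hs i))]
  refine Finset.prod_congr rfl fun i _ => ?_
  rw [lintegral_indicator (hs i), gaussianReal_apply 0 one_ne_zero]

lemma map_pi_gauss {p : ℕ} (M : Matrix (Fin p) (Fin p) ℝ)
    (h2 : Mᵀ * M = 1) :
    Measure.map (fun x => M *ᵥ x) (Measure.pi fun _ : Fin p => gaussianReal 0 1)
      = Measure.pi fun _ : Fin p => gaussianReal 0 1 := by
  have hdd : M.det * M.det = 1 := by
    have := congrArg Matrix.det h2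
    rwa [Matrix.det_mul, Matrix.det_transpose, Matrix.det_one] at this
  have hdet0 : M.det ≠ 0 := by
    intro h; rw [h, mul_zero] at hdd; exact zero_ne_one hdd
  have habs : |M.det⁻¹| = 1 := by
    rcases mul_self_eq_one_iff.mp hdd with h | h <;> rw [h] <;> norm_num
  have hmeas : Measurable fun x : Fin p → ℝ => M *ᵥ x := by
    have : Continuous fun x : Fin p → ℝ => M *ᵥ x :=
      LinearMap.continuous_of_finiteDimensional (Matrix.mulVecLin M)
    exact this.measurable
  have hvol : Measure.map (fun x : Fin p → ℝ => M *ᵥ x) volume = volume := by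
    have h := Real.map_matrix_volume_pi_eq_smul_volume_pi hdet0
    have he : ⇑(Matrix.toLin' M) = fun x : Fin p → ℝ => M *ᵥ x := by
      funext x; exact Matrix.toLin'_apply M x
    rw [he] at h
    rw [h, habs, ENNReal.ofReal_one, one_smul]
  have hGinv : ∀ x : Fin p → ℝ,
      (∏ i, gaussianPDF 0 1 ((M *ᵥ x) i)) = ∏ i, gaussianPDF 0 1 (x i) := by
    intro x
    have hsq : ∑ i, (M *ᵥ x) i ^ 2 = ∑ i, x i ^ 2 := by
      have h1 : (M *ᵥ x) ⬝ᵥ (M *ᵥ x) = x ⬝ᵥ x := by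
        rw [Matrix.dotProduct_mulVec, ← Matrix.vecMul_transpose,
          Matrix.vecMul_vecMul, h2, Matrix.vecMul_one]
      simpa [dotProduct, pow_two] using h1
    have hform : ∀ y : Fin p → ℝ, ∏ i, gaussianPDFReal 0 1 (y i)
        = (√(2*π))⁻¹ ^ p * Real.exp (-(∑ i, y i ^ 2)/2) := by
      intro y
      simp only [gaussianPDFReal, NNReal.coe_one, mul_one, sub_zero]
      rw [Finset.prod_mul_distrib, Finset.prod_const, ← Real.exp_sum,
        Finset.card_univ, Fintype.card_fin]
      congr 1
      rw [← Finset.sum_div]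
      congr 1
      simp
    simp only [gaussianPDF]
    rw [← ENNReal.ofReal_prod_of_nonneg (fun i _ => gaussianPDFReal_nonneg _ _ _),
      ← ENNReal.ofReal_prod_of_nonneg (fun i _ => gaussianPDFReal_nonneg _ _ _),
      hform, hform, hsq]
  have hGmeas : Measurable fun x : Fin p → ℝ => ∏ i, gaussianPDF 0 1 (x i) :=
    Finset.measurable_prod _ fun (i : Fin p) _ =>
      (measurable_gaussianPDF 0 1).comp (measurable_pi_apply i)
  ext s hs
  rw [Measure.map_apply hmeas hs, pi_gauss p,
    withDensity_apply _ (hmeas hs), withDensity_apply _ hs,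
    ← lintegral_indicator (hmeas hs), ← lintegral_indicator hs]
  have key : ∀ x : Fin p → ℝ,
      Set.indicator ((fun x => M *ᵥ x) ⁻¹' s) (fun x => ∏ i, gaussianPDF 0 1 (x i)) x
        = Set.indicator s (fun x => ∏ i, gaussianPDF 0 1 (x i)) (M *ᵥ x) := by
    intro x
    by_cases h : M *ᵥ x ∈ s
    · rw [Set.indicator_of_mem h, Set.indicator_of_mem (by exact h), hGinv]
    · rw [Set.indicator_of_notMem h, Set.indicator_of_notMem (by exact h)]
  simp_rw [key]
  rw [← lintegral_map (hGmeas.indicator hs) hmeas, hvol]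

lemma integral_pi_gauss_prod {p : ℕ} (g : Fin p → ℝ → ℝ) :
    ∫ x : Fin p → ℝ, ∏ i, g i (x i) ∂(Measure.pi fun _ : Fin p => gaussianReal 0 1)
      = ∏ i, ∫ t, g i t ∂(gaussianReal 0 1) := by
  letI : MeasureSpace ℝ := ⟨gaussianReal 0 1⟩
  letI : SigmaFinite (volume : Measure ℝ) :=
    (inferInstance : SigmaFinite (gaussianReal 0 1))
  exact MeasureTheory.integral_fintype_prod_eq_prod g

lemma integral_gauss_sq (z a b : ℝ) (h : 2 * z * b ^ 2 < 1) :
    ∫ t, Real.exp (z * (a + b * t) ^ 2) ∂(gaussianReal 0 1)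
      = Real.exp (z * a ^ 2 / (1 - 2 * z * b ^ 2)) / √(1 - 2 * z * b ^ 2) := by
  have hpos : (0 : ℝ) < 1 - 2 * z * b ^ 2 := by linarith
  have hcpos : (0 : ℝ) < (1 - 2 * z * b ^ 2) / 2 := by linarith
  rw [gaussianReal_of_var_ne_zero _ one_ne_zero]
  have hpdf : (gaussianPDF 0 1) = fun x : ℝ => ((gaussianPDFReal 0 1 x).toNNReal : ℝ≥0∞) := by
    funext x; rfl
  rw [hpdf, integral_withDensity_eq_integral_smul
    ((measurable_gaussianPDFReal 0 1).real_toNNReal)]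
  have key : ∀ t : ℝ, (gaussianPDFReal 0 1 t).toNNReal • Real.exp (z * (a + b * t) ^ 2)
      = ((√(2*π))⁻¹ * Real.exp (z * a ^ 2 / (1 - 2 * z * b ^ 2)))
        * Real.exp (-((1 - 2 * z * b ^ 2)/2)
            * (t - z * a * b / ((1 - 2 * z * b ^ 2)/2)) ^ 2) := by
    intro t
    rw [NNReal.smul_def, Real.coe_toNNReal _ (gaussianPDFReal_nonneg _ _ _)]
    simp only [gaussianPDFReal, NNReal.coe_one, mul_one, sub_zero, smul_eq_mul]
    rw [mul_assoc, mul_assoc, ← Real.exp_add, ← Real.exp_add]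
    congr 2
    have h0 : (1 - 2*z*b^2) ≠ 0 := ne_of_gt hpos
    field_simp
    ring
  simp_rw [key]
  rw [integral_const_mul]
  rw [integral_sub_right_eq_self
    (fun t => Real.exp (-((1 - 2 * z * b ^ 2)/2) * t ^ 2)) (z * a * b / ((1 - 2 * z * b ^ 2)/2))]
  rw [integral_gaussian]
  have h2c : π / ((1 - 2 * z * b ^ 2) / 2) = 2 * π / (1 - 2 * z * b ^ 2) := by
    field_simp
  rw [h2c, Real.sqrt_div (by positivity : (0:ℝ) ≤ 2*π)]
  have h2π : √(2*π) ≠ 0 := by positivity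
  have hs : √(1 - 2 * z * b ^ 2) ≠ 0 := by positivity
  field_simp

lemma aux_sum_add_sq {p : ℕ} (a b : Fin p → ℝ) :
    ∑ j, (a j + b j) ^ 2 = a ⬝ᵥ a + 2 * (a ⬝ᵥ b) + b ⬝ᵥ b := by
  rw [dotProduct, dotProduct, dotProduct, Finset.mul_sum,
    ← Finset.sum_add_distrib, ← Finset.sum_add_distrib]
  refine Finset.sum_congr rfl fun j _ => ?_
  ring

lemma aux_norm {p : ℕ} (U : Matrix (Fin p) (Fin p) ℝ)
    (hU1 : U * star U = 1) (hU2 : star U * U = 1) (m y : Fin p → ℝ) :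
    ∑ j, (m j + (U *ᵥ y) j) ^ 2 = ∑ j, (((star U) *ᵥ m) j + y j) ^ 2 := by
  have hT : star U = Uᵀ := by
    rw [Matrix.star_eq_conjTranspose, Matrix.conjTranspose_eq_transpose_of_trivial]
  have hdual : ∀ v w : Fin p → ℝ, v ⬝ᵥ (U *ᵥ w) = ((star U) *ᵥ v) ⬝ᵥ w := by
    intro v w
    rw [Matrix.dotProduct_mulVec, ← Matrix.mulVec_transpose, ← hT]
  have hdual2 : ∀ v w : Fin p → ℝ, v ⬝ᵥ ((star U) *ᵥ w) = (U *ᵥ v) ⬝ᵥ w := by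
    intro v w
    rw [Matrix.dotProduct_mulVec, hT, Matrix.vecMul_transpose]
  rw [aux_sum_add_sq, aux_sum_add_sq]
  have e1 : (U *ᵥ y) ⬝ᵥ (U *ᵥ y) = y ⬝ᵥ y := by
    rw [hdual, Matrix.mulVec_mulVec, hU2, Matrix.one_mulVec]
  have e2 : m ⬝ᵥ (U *ᵥ y) = ((star U) *ᵥ m) ⬝ᵥ y := hdual m y
  have e3 : ((star U) *ᵥ m) ⬝ᵥ ((star U) *ᵥ m) = m ⬝ᵥ m := by
    rw [hdual2, Matrix.mulVec_mulVec, hU1, Matrix.one_mulVec]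
  rw [e1, e2, e3]


end Stmt4Aux

theorem stmt_4 (p : ℕ) (S : Matrix (Fin p) (Fin p) ℝ) (hS : S.PosDef)
    (m : Fin p → ℝ) (z : ℝ)
    (hz : 2 * |z| * (⨆ i, hS.1.eigenvalues i) < 1) :
    Summable (fun k : ℕ =>
      2 ^ (k + 1) * z ^ (k + 1) / (k + 1) *
        (S ^ (k + 1) + ((k : ℝ) + 1) • (S ^ k * Matrix.vecMulVec m m)).trace) ∧
    (∫ ξ : Fin p → ℝ,
        Real.exp (z * ∑ j, (m j + hS.posSemidef.sqrt.mulVec ξ j) ^ 2)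
        ∂(Measure.pi fun _ => gaussianReal 0 1)) =
      Real.exp ((1 / 2) * ∑' k : ℕ,
        2 ^ (k + 1) * z ^ (k + 1) / (k + 1) *
          (S ^ (k + 1) + ((k : ℝ) + 1) • (S ^ k * Matrix.vecMulVec m m)).trace) := by
  classical
  set ev : Fin p → ℝ := hS.1.eigenvalues with hev
  set U : Matrix (Fin p) (Fin p) ℝ := (hS.1.eigenvectorUnitary : Matrix (Fin p) (Fin p) ℝ) with hUdef
  have hU1 : U * star U = 1 := Matrix.mem_unitaryGroup_iff.mp (hS.1.eigenvectorUnitary).2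
  have hU2 : star U * U = 1 := Matrix.mem_unitaryGroup_iff'.mp (hS.1.eigenvectorUnitary).2
  have hT : star U = Uᵀ := by
    rw [Matrix.star_eq_conjTranspose, Matrix.conjTranspose_eq_transpose_of_trivial]
  have hspec : S = U * Matrix.diagonal ev * star U := by
    simpa using hS.1.spectral_theorem
  have hsqrt : hS.posSemidef.sqrt = U * Matrix.diagonal (fun i => √(ev i)) * star U := rfl
  set μ : Fin p → ℝ := (star U) *ᵥ m with hμ
  have hevpos : ∀ i, 0 < ev i := fun i => hS.eigenvalues_pos i
  have hub : ∀ i, 2 * |z| * ev i < 1 := by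
    intro i
    refine lt_of_le_of_lt ?_ hz
    exact mul_le_mul_of_nonneg_left
      (le_ciSup (Set.Finite.bddAbove (Set.finite_range _)) i) (by positivity)
  have habs : ∀ i, |2 * z * ev i| < 1 := by
    intro i
    rw [abs_mul, abs_mul, abs_of_pos (hevpos i), abs_two]
    exact hub i
  have hlt : ∀ i, 2 * z * ev i < 1 := fun i => lt_of_le_of_lt (le_abs_self _) (habs i)
  have hpos1 : ∀ i, 0 < 1 - 2 * z * ev i := fun i => by linarith [hlt i]
  -- powers of S
  have hpow : ∀ k : ℕ, S ^ k = U * Matrix.diagonal (fun i => ev i ^ k) * star U := by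
    intro k
    induction k with
    | zero =>
      have h1 : (Matrix.diagonal (fun i => ev i ^ 0) : Matrix (Fin p) (Fin p) ℝ) = 1 := by
        simp
      rw [pow_zero, h1, Matrix.mul_one, hU1]
    | succ k ih =>
      rw [pow_succ, ih, hspec]
      have hdd : (Matrix.diagonal fun i => ev i ^ k) * Matrix.diagonal ev
          = Matrix.diagonal (fun i => ev i ^ (k + 1)) := by
        rw [Matrix.diagonal_mul_diagonal]
        exact congrArg Matrix.diagonal (funext fun i => (pow_succ (ev i) k).symm)
      calc (U * Matrix.diagonal (fun i => ev i ^ k) * star U) * (U * Matrix.diagonal ev * star U)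
          = U * ((Matrix.diagonal fun i => ev i ^ k) * ((star U * U) * (Matrix.diagonal ev * star U))) := by
            simp only [Matrix.mul_assoc]
        _ = U * ((Matrix.diagonal fun i => ev i ^ k) * (Matrix.diagonal ev * star U)) := by
            rw [hU2, Matrix.one_mul]
        _ = U * (((Matrix.diagonal fun i => ev i ^ k) * Matrix.diagonal ev) * star U) := by
            rw [Matrix.mul_assoc]
        _ = U * Matrix.diagonal (fun i => ev i ^ (k + 1)) * star U := by
            rw [hdd, Matrix.mul_assoc]
  have htr : ∀ k : ℕ, (S ^ k).trace = ∑ i, ev i ^ k := by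
    intro k
    rw [hpow k, Matrix.trace_mul_cycle, hU2, Matrix.one_mul, Matrix.trace_diagonal]
  have hdual : ∀ v w : Fin p → ℝ, v ⬝ᵥ (U *ᵥ w) = ((star U) *ᵥ v) ⬝ᵥ w := by
    intro v w
    rw [Matrix.dotProduct_mulVec, ← Matrix.mulVec_transpose, ← hT]
  have hquad : ∀ k : ℕ, (S ^ k * Matrix.vecMulVec m m).trace = ∑ i, ev i ^ k * μ i ^ 2 := by
    intro k
    have h1 : (S ^ k * Matrix.vecMulVec m m).trace = m ⬝ᵥ ((S ^ k) *ᵥ m) := by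
      rw [Matrix.trace]
      simp only [Matrix.diag_apply, Matrix.mul_apply, Matrix.vecMulVec_apply,
        Matrix.mulVec, dotProduct]
      refine Finset.sum_congr rfl fun i _ => ?_
      rw [Finset.mul_sum]
      refine Finset.sum_congr rfl fun j _ => ?_
      ring
    rw [h1, hpow k, ← Matrix.mulVec_mulVec, ← Matrix.mulVec_mulVec, hdual, ← hμ]
    simp only [dotProduct, Matrix.mulVec_diagonal]
    refine Finset.sum_congr rfl fun i _ => ?_
    ring
  -- substitution identity
  have hsub : ∀ y : Fin p → ℝ,
      hS.posSemidef.sqrt *ᵥ (U *ᵥ y) = U *ᵥ (fun i => √(ev i) * y i) := by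
    intro y
    have hd : (Matrix.diagonal fun i => √(ev i)) *ᵥ y = fun i => √(ev i) * y i := by
      funext i
      rw [Matrix.mulVec_diagonal]
    rw [Matrix.mulVec_mulVec, hsqrt, Matrix.mul_assoc (U * Matrix.diagonal fun i => √(ev i)) (star U) U,
      hU2, Matrix.mul_one, ← Matrix.mulVec_mulVec, hd]
  have hnorm : ∀ y : Fin p → ℝ,
      ∑ j, (m j + (hS.posSemidef.sqrt *ᵥ (U *ᵥ y)) j) ^ 2
        = ∑ j, (μ j + √(ev j) * y j) ^ 2 := by
    intro y
    rw [hsub y]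
    exact aux_norm U hU1 hU2 m (fun i => √(ev i) * y i)
  -- the integral
  have hUcont : Continuous fun x : Fin p → ℝ => U *ᵥ x :=
    LinearMap.continuous_of_finiteDimensional (Matrix.mulVecLin U)
  have hAcont : Continuous fun ξ : Fin p → ℝ => hS.posSemidef.sqrt *ᵥ ξ :=
    LinearMap.continuous_of_finiteDimensional (Matrix.mulVecLin hS.posSemidef.sqrt)
  have hfcont : Continuous fun ξ : Fin p → ℝ =>
      Real.exp (z * ∑ j, (m j + (hS.posSemidef.sqrt *ᵥ ξ) j) ^ 2) := by
    refine Continuous.rexp ?_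
    refine continuous_const.mul ?_
    refine continuous_finset_sum _ fun j _ => ?_
    exact (continuous_const.add ((continuous_apply j).comp hAcont)).pow 2
  have hmapU : Measure.map (fun x => U *ᵥ x) (Measure.pi fun _ : Fin p => gaussianReal 0 1)
      = Measure.pi fun _ : Fin p => gaussianReal 0 1 := by
    refine map_pi_gauss U ?_
    rw [← hT]; exact hU2
  have hI : (∫ ξ : Fin p → ℝ,
        Real.exp (z * ∑ j, (m j + hS.posSemidef.sqrt.mulVec ξ j) ^ 2)
        ∂(Measure.pi fun _ => gaussianReal 0 1))
      = ∏ j, (Real.exp (z * μ j ^ 2 / (1 - 2 * z * ev j)) / √(1 - 2 * z * ev j)) := by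
    rw [← hmapU, integral_map hUcont.measurable.aemeasurable
      hfcont.aestronglyMeasurable]
    have hptw : ∀ y : Fin p → ℝ,
        Real.exp (z * ∑ j, (m j + (hS.posSemidef.sqrt *ᵥ (U *ᵥ y)) j) ^ 2)
          = ∏ j, Real.exp (z * (μ j + √(ev j) * y j) ^ 2) := by
      intro y
      rw [hnorm y, Finset.mul_sum, Real.exp_sum]
    simp_rw [hptw]
    rw [integral_pi_gauss_prod (fun j t => Real.exp (z * (μ j + √(ev j) * t) ^ 2))]
    refine Finset.prod_congr rfl fun j _ => ?_
    have hj : 2 * z * (√(ev j)) ^ 2 < 1 := by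
      rw [Real.sq_sqrt (hevpos j).le]; exact hlt j
    rw [integral_gauss_sq z (μ j) (√(ev j)) hj, Real.sq_sqrt (hevpos j).le]
  -- the series
  have hterm : ∀ k : ℕ, (2:ℝ) ^ (k + 1) * z ^ (k + 1) / (k + 1) *
        (S ^ (k + 1) + ((k : ℝ) + 1) • (S ^ k * Matrix.vecMulVec m m)).trace
      = ∑ j, ((2 * z * ev j) ^ (k + 1) / ((k:ℝ) + 1)
          + 2 * z * μ j ^ 2 * (2 * z * ev j) ^ k) := by
    intro k
    rw [Matrix.trace_add, Matrix.trace_smul, htr (k + 1), hquad k, smul_eq_mul]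
    have h2 : ∑ i, ev i ^ (k + 1) + ((k:ℝ) + 1) * ∑ i, ev i ^ k * μ i ^ 2
        = ∑ i, (ev i ^ (k + 1) + ((k:ℝ) + 1) * (ev i ^ k * μ i ^ 2)) := by
      rw [Finset.mul_sum, Finset.sum_add_distrib]
    rw [h2, Finset.mul_sum]
    refine Finset.sum_congr rfl fun j _ => ?_
    have hk : ((k:ℝ) + 1) ≠ 0 := by positivity
    field_simp
    ring
  have hHS : ∀ j : Fin p, HasSum
      (fun k : ℕ => (2 * z * ev j) ^ (k + 1) / ((k:ℝ) + 1)
        + 2 * z * μ j ^ 2 * (2 * z * ev j) ^ k)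
      (-Real.log (1 - 2 * z * ev j) + 2 * z * μ j ^ 2 * (1 - 2 * z * ev j)⁻¹) :=
    fun j => (hasSum_pow_div_log_of_abs_lt_one (habs j)).add
      ((hasSum_geometric_of_abs_lt_one (habs j)).mul_left _)
  have heq : (fun k : ℕ => 2 ^ (k + 1) * z ^ (k + 1) / ((k:ℝ) + 1) *
        (S ^ (k + 1) + ((k : ℝ) + 1) • (S ^ k * Matrix.vecMulVec m m)).trace)
      = fun k : ℕ => ∑ j, ((2 * z * ev j) ^ (k + 1) / ((k:ℝ) + 1)
          + 2 * z * μ j ^ 2 * (2 * z * ev j) ^ k) := funext hterm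
  have hHSt : HasSum (fun k : ℕ => 2 ^ (k + 1) * z ^ (k + 1) / ((k:ℝ) + 1) *
        (S ^ (k + 1) + ((k : ℝ) + 1) • (S ^ k * Matrix.vecMulVec m m)).trace)
      (∑ j, (-Real.log (1 - 2 * z * ev j) + 2 * z * μ j ^ 2 * (1 - 2 * z * ev j)⁻¹)) := by
    rw [heq]
    exact hasSum_sum fun j _ => hHS j
  refine ⟨hHSt.summable, ?_⟩
  rw [hI, hHSt.tsum_eq, Finset.mul_sum, Real.exp_sum]
  refine Finset.prod_congr rfl fun j _ => ?_
  have hexp : Real.exp (Real.log (1 - 2 * z * ev j) / 2) = √(1 - 2 * z * ev j) := by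
    rw [← Real.log_sqrt (hpos1 j).le, Real.exp_log (Real.sqrt_pos.mpr (hpos1 j))]
  have harith : (1/2 : ℝ) * (-Real.log (1 - 2 * z * ev j)
      + 2 * z * μ j ^ 2 * (1 - 2 * z * ev j)⁻¹)
      = z * μ j ^ 2 / (1 - 2 * z * ev j) + -(Real.log (1 - 2 * z * ev j) / 2) := by
    rw [div_eq_mul_inv]
    ring
  rw [harith, Real.exp_add, Real.exp_neg, hexp, div_eq_mul_inv]
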